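/- The function h : (x₊, ∞) → ℝ has exactly one zero x_{ph} in (x₊, ∞); moreover h(x) < 0 for x₊ < x < x_{ph} and h(x) > 0 for x > x_{ph}. -/

import Mathlib

open Real Filter Topology Set

noncomputable section

/-- `h(x) = x(x−3) + 2α²(1−β²) + 2αβ√(x − α²(1−β²))`. -/
def hfun (α β x : ℝ) : ℝ :=
  x * (x - 3) + 2 * α ^ 2 * (1 - β ^ 2) + 2 * α * β * Real.sqrt (x - α ^ 2 * (1 - β ^ 2))

/-- `G(x) = x·Δ̄(x) − [h(x) − x(x−1)]²`, with `Δ̄(x) = x² − 2x + α²`. -/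
def Gfun (α β x : ℝ) : ℝ :=
  x * (x ^ 2 - 2 * x + α ^ 2) - (hfun α β x - x * (x - 1)) ^ 2

/-- The effective potential `w_{α,β,λ}(x) = αβλ/x² + √(Δ̄(x)(1 + λ²/x²))`. -/
def wfun (α β lam x : ℝ) : ℝ :=
  α * β * lam / x ^ 2 + Real.sqrt ((x ^ 2 - 2 * x + α ^ 2) * (1 + lam ^ 2 / x ^ 2))

/-- `λ_{sph}(x) = x(√(x − α²(1−β²)) − αβ)/√(h(x))`. -/
def lamsph (α β x : ℝ) : ℝ :=
  x * (Real.sqrt (x - α ^ 2 * (1 - β ^ 2)) - α * β) / Real.sqrt (hfun α β x)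

/-- `ε_{sph}(x) = (x² − 2x + α²(1−β²) + αβ√(x − α²(1−β²)))/(x√(h(x)))`. -/
def epssph (α β x : ℝ) : ℝ :=
  (x ^ 2 - 2 * x + α ^ 2 * (1 - β ^ 2) + α * β * Real.sqrt (x - α ^ 2 * (1 - β ^ 2))) /
    (x * Real.sqrt (hfun α β x))

lemma eventually_pos_right' {f : ℝ → ℝ} {a d : ℝ} (hf : HasDerivAt f d a)
    (hd : 0 < d) : ∀ᶠ x in 𝓝[>] a, f a < f x := by
  have h1 : Tendsto (slope f a) (𝓝[≠] a) (𝓝 d) := hasDerivAt_iff_tendsto_slope.mp hf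
  have h2 : ∀ᶠ x in 𝓝[≠] a, 0 < slope f a x := h1.eventually_const_lt hd
  have h3 : 𝓝[>] a ≤ 𝓝[≠] a := nhdsWithin_mono a fun x hx => ne_of_gt hx
  filter_upwards [h3 h2, self_mem_nhdsWithin] with x hx hx'
  have hxa : (0:ℝ) < x - a := sub_pos.2 hx'
  have h4 := mul_pos hx hxa
  rw [slope_def_field, div_mul_cancel₀ _ (ne_of_gt hxa)] at h4
  linarith

lemma eventually_neg_left' {f : ℝ → ℝ} {a d : ℝ} (hf : HasDerivAt f d a)
    (hd : 0 < d) : ∀ᶠ x in 𝓝[<] a, f x < f a := by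
  have h1 : Tendsto (slope f a) (𝓝[≠] a) (𝓝 d) := hasDerivAt_iff_tendsto_slope.mp hf
  have h2 : ∀ᶠ x in 𝓝[≠] a, 0 < slope f a x := h1.eventually_const_lt hd
  have h3 : 𝓝[<] a ≤ 𝓝[≠] a := nhdsWithin_mono a fun x hx => ne_of_lt hx
  filter_upwards [h3 h2, self_mem_nhdsWithin] with x hx hx'
  have hxa : x - a < 0 := sub_neg.2 hx'
  have h4 := mul_neg_of_pos_of_neg hx hxa
  rw [slope_def_field, div_mul_cancel₀ _ (ne_of_lt hxa)] at h4
  linarith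

lemma key_pos (c t x : ℝ) (hc : 0 ≤ c) (hct : c + t^2 < 1) (hx : 1 < x)
    (hh : 0 ≤ x*(x-3) + 2*c + 2*t*Real.sqrt (x - c)) :
    0 < 2*x - 3 + t / Real.sqrt (x - c) := by
  have hc1 : c < 1 := by nlinarith [sq_nonneg t]
  have hxc : 0 < x - c := by linarith
  set u := Real.sqrt (x - c) with hu
  have hu0 : 0 < u := Real.sqrt_pos.mpr hxc
  have hu2 : u^2 = x - c := Real.sq_sqrt hxc.le
  have key : 0 < (2*x-3)*u + t := by
    rcases lt_or_ge (4*c) (3*x) with hcase | hcase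
    · nlinarith [mul_pos (sub_pos.2 hx) (show (0:ℝ) < 3*x - 4*c by linarith),
        mul_pos hu0 hu0, hu2, sq_nonneg u]
    · exfalso
      have hx2 : x < 4/3 := by nlinarith
      have hP : 0 < 3*x - x^2 - 2*c := by nlinarith
      have h2tu : 3*x - x^2 - 2*c ≤ 2*t*u := by nlinarith
      have hsq : (3*x - x^2 - 2*c)^2 ≤ (2*t*u)^2 := by nlinarith
      have ht2 : t^2 < 1 - c := by linarith
      have hlt : (2*t*u)^2 < (3*x - x^2 - 2*c)^2 := by
        have e1 : (2*t*u)^2 = 4*t^2*(x-c) := by rw [mul_pow, mul_pow]; rw [hu2]; ring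
        have e2 : 4*t^2*(x-c) < 4*(1-c)*(x-c) := by nlinarith
        have e3 : 4*(1-c)*(x-c) < (3*x - x^2 - 2*c)^2 := by
          nlinarith [pow_pos (sub_pos.2 hx) 3, sq_nonneg (x-1),
            mul_nonneg (show (0:ℝ) ≤ 4*c - 3*x by linarith) (sq_nonneg (x-1)),
            pow_pos (sub_pos.2 hx) 4]
        linarith [e1 ▸ e2, e3]
      linarith
  have heq : 2*x - 3 + t / u = ((2*x-3)*u + t)/u := by field_simp
  rw [heq]
  exact div_pos key hu0

lemma hfun_cont (α β : ℝ) : Continuous (hfun α β) := by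
  unfold hfun; fun_prop

lemma hfun_deriv (α β x : ℝ) (hx : α ^ 2 * (1 - β ^ 2) < x) :
    HasDerivAt (hfun α β)
      (2*x - 3 + (α*β) / Real.sqrt (x - α ^ 2 * (1 - β ^ 2))) x := by
  have hxc : 0 < x - α ^ 2 * (1 - β ^ 2) := sub_pos.2 hx
  have h2 : HasDerivAt (fun y : ℝ => y - α ^ 2 * (1 - β ^ 2)) 1 x :=
    (hasDerivAt_id x).sub_const _
  have h3 : HasDerivAt (fun y : ℝ => Real.sqrt (y - α ^ 2 * (1 - β ^ 2)))
      (1 / (2 * Real.sqrt (x - α ^ 2 * (1 - β ^ 2)))) x := h2.sqrt (ne_of_gt hxc)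
  have h1 : HasDerivAt (fun y : ℝ => y * (y - 3)) (1*(x-3) + x*1) x :=
    (hasDerivAt_id x).mul ((hasDerivAt_id x).sub_const 3)
  have h4 := (h1.add_const (2 * α ^ 2 * (1 - β ^ 2))).add (h3.const_mul (2 * α * β))
  have hs0 : Real.sqrt (x - α ^ 2 * (1 - β ^ 2)) ≠ 0 :=
    ne_of_gt (Real.sqrt_pos.mpr hxc)
  refine h4.congr_deriv ?_
  field_simp
  ring

/-- The function `h` has exactly one zero `x_{ph}` in `(x₊, ∞)`; it is
strictly negative on `(x₊, x_{ph})` and strictly positive on `(x_{ph}, ∞)`. -/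
theorem hfun_unique_zero (α β : ℝ) (hα0 : 0 ≤ α) (hα1 : α < 1)
    (hβ0 : -1 ≤ β) (hβ1 : β ≤ 1) :
    ∃ xph : ℝ, 1 + Real.sqrt (1 - α ^ 2) < xph ∧ hfun α β xph = 0 ∧
      (∀ x : ℝ, 1 + Real.sqrt (1 - α ^ 2) < x → x < xph → hfun α β x < 0) ∧
      (∀ x : ℝ, xph < x → 0 < hfun α β x) := by
  have hβsq : β ^ 2 ≤ 1 := by nlinarith
  have hαsq : α ^ 2 < 1 := by nlinarith
  have hc : 0 ≤ α ^ 2 * (1 - β ^ 2) := mul_nonneg (sq_nonneg α) (by nlinarith)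
  have hct : α ^ 2 * (1 - β ^ 2) + (α * β) ^ 2 < 1 := by nlinarith
  have hc1 : α ^ 2 * (1 - β ^ 2) < 1 := by nlinarith [sq_nonneg (α * β)]
  set s0 := Real.sqrt (1 - α ^ 2) with hs0def
  have hs0pos : 0 < s0 := Real.sqrt_pos.mpr (by linarith)
  have hs02 : s0 ^ 2 = 1 - α ^ 2 := Real.sq_sqrt (by linarith)
  have hs0le : s0 ≤ 1 := by
    rw [hs0def]
    calc Real.sqrt (1 - α ^ 2) ≤ Real.sqrt 1 := Real.sqrt_le_sqrt (by nlinarith)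
    _ = 1 := Real.sqrt_one
  set xp := 1 + s0 with hxpdef
  have hxp1 : 1 < xp := by linarith
  have hxp2 : xp ≤ 2 := by linarith
  -- h(x₊) < 0
  have hnegxp : hfun α β xp < 0 := by
    have hxpc : (0:ℝ) ≤ xp - α ^ 2 * (1 - β ^ 2) := by linarith
    set w := Real.sqrt (xp - α ^ 2 * (1 - β ^ 2)) with hwdef
    have hw2 : w ^ 2 = xp - α ^ 2 * (1 - β ^ 2) := Real.sq_sqrt hxpc
    have hwt : w ≠ α * β := by
      intro heq
      rw [heq] at hw2
      nlinarith
    have h0 : 0 < (w - α * β) ^ 2 :=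
      lt_of_le_of_ne (sq_nonneg _) (Ne.symm (pow_ne_zero 2 (sub_ne_zero.2 hwt)))
    show xp * (xp - 3) + 2 * α ^ 2 * (1 - β ^ 2) + 2 * α * β * w < 0
    nlinarith [h0, hw2, hs02]
  -- h(4) > 0
  have hfour : 0 < hfun α β 4 := by
    have h4c : (0:ℝ) ≤ 4 - α ^ 2 * (1 - β ^ 2) := by linarith
    set S := Real.sqrt (4 - α ^ 2 * (1 - β ^ 2)) with hSdef
    have hS0 : 0 ≤ S := Real.sqrt_nonneg _
    have hS2 : S ≤ 2 := by
      rw [hSdef, show (2:ℝ) = Real.sqrt 4 by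
        rw [show (4:ℝ) = 2 ^ 2 by norm_num, Real.sqrt_sq (by norm_num)]]
      exact Real.sqrt_le_sqrt (by linarith)
    show 0 < 4 * (4 - 3) + 2 * α ^ 2 * (1 - β ^ 2) + 2 * α * β * S
    nlinarith [mul_nonneg (show (0:ℝ) ≤ α * β + α by nlinarith) hS0,
      mul_le_mul_of_nonneg_left hS2 hα0]
  -- derivative is positive wherever h ≥ 0 (for x > xp)
  have hderivpos : ∀ a, xp < a → 0 ≤ hfun α β a →
      ∃ d, HasDerivAt (hfun α β) d a ∧ 0 < d := by
    intro a ha hha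
    have h1a : 1 < a := lt_trans hxp1 ha
    have hca : α ^ 2 * (1 - β ^ 2) < a := lt_trans hc1 h1a
    refine ⟨_, hfun_deriv α β a hca, ?_⟩
    have hh' : 0 ≤ a*(a-3) + 2*(α ^ 2 * (1 - β ^ 2)) +
        2*(α*β)*Real.sqrt (a - α ^ 2 * (1 - β ^ 2)) := by
      unfold hfun at hha; linarith
    exact key_pos (α ^ 2 * (1 - β ^ 2)) (α * β) a hc hct h1a hh'
  -- once h hits zero past xp, it stays positive
  have pos_after : ∀ a, xp < a → hfun α β a = 0 → ∀ b, a < b → 0 < hfun α β b := by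
    intro a ha ha0 b hab
    by_contra hcon
    push_neg at hcon
    obtain ⟨d, hd, hdpos⟩ := hderivpos a ha (le_of_eq ha0.symm)
    have hevr : ∀ᶠ x in 𝓝[>] a, 0 < hfun α β x := by
      filter_upwards [eventually_pos_right' hd hdpos] with x hx
      rwa [ha0] at hx
    set S := {z : ℝ | a < z ∧ z ≤ b ∧ hfun α β z ≤ 0} with hSdef
    have hSne : S.Nonempty := ⟨b, hab, le_rfl, hcon⟩
    have hSbdd : BddBelow S := ⟨a, fun z hz => hz.1.le⟩
    set m := sInf S with hmdef
    have ham : a ≤ m := le_csInf hSne fun z hz => hz.1.le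
    have hmb : m ≤ b := csInf_le hSbdd ⟨hab, le_rfl, hcon⟩
    rcases eq_or_lt_of_le ham with heq | hlt
    · obtain ⟨u, hu, hsub⟩ := mem_nhdsGT_iff_exists_Ioc_subset.mp hevr
      obtain ⟨z, hzS, hzu⟩ := exists_lt_of_csInf_lt hSne
        (show sInf S < u by rw [← hmdef, ← heq]; exact hu)
      exact absurd (hsub ⟨hzS.1, hzu.le⟩) (not_lt.2 hzS.2.2)
    · have hmid : ∀ z, a < z → z < m → 0 < hfun α β z := by
        intro z h1 h2
        by_contra hz
        push_neg at hz
        exact absurd (csInf_le hSbdd ⟨h1, le_trans h2.le hmb, hz⟩) (not_le.2 h2)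
      have hmle : hfun α β m ≤ 0 := by
        have hcl : m ∈ closure S := csInf_mem_closure hSne hSbdd
        have hsub : closure S ⊆ {z | hfun α β z ≤ 0} :=
          closure_minimal (fun z hz => hz.2.2)
            (isClosed_le (hfun_cont α β) continuous_const)
        exact hsub hcl
      have hmge : 0 ≤ hfun α β m := by
        have htend : Tendsto (hfun α β) (𝓝[<] m) (𝓝 (hfun α β m)) :=
          ((hfun_cont α β).tendsto m).mono_left nhdsWithin_le_nhds
        refine ge_of_tendsto htend ?_
        filter_upwards [Ioo_mem_nhdsLT_of_mem ⟨hlt, le_rfl⟩] with z hz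
        exact (hmid z hz.1 hz.2).le
      have hm0 : hfun α β m = 0 := le_antisymm hmle hmge
      obtain ⟨d2, hd2, hd2pos⟩ := hderivpos m (lt_trans ha hlt) (le_of_eq hm0.symm)
      have hevl : ∀ᶠ x in 𝓝[<] m, hfun α β x < 0 := by
        filter_upwards [eventually_neg_left' hd2 hd2pos] with x hx
        rwa [hm0] at hx
      have hev2 : ∀ᶠ x in 𝓝[<] m, x ∈ Ioo a m :=
        eventually_of_mem (Ioo_mem_nhdsLT_of_mem ⟨hlt, le_rfl⟩) fun _ h => h
      obtain ⟨z, hzneg, hzIoo⟩ := (hevl.and hev2).exists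
      exact absurd (hmid z hzIoo.1 hzIoo.2) (not_lt.2 hzneg.le)
  -- construct xph
  set Z := {x : ℝ | xp < x ∧ 0 ≤ hfun α β x} with hZdef
  have hZ4 : (4:ℝ) ∈ Z := ⟨by linarith, hfour.le⟩
  have hZne : Z.Nonempty := ⟨4, hZ4⟩
  have hZbdd : BddBelow Z := ⟨xp, fun z hz => hz.1.le⟩
  set xph := sInf Z with hxphdef
  have hev : ∀ᶠ y in 𝓝 xp, hfun α β y < 0 :=
    ((hfun_cont α β).tendsto xp).eventually_lt_const hnegxp
  obtain ⟨ε, hε, hball⟩ := Metric.eventually_nhds_iff.mp hev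
  have hlow : ∀ z ∈ Z, xp + ε ≤ z := by
    intro z hz
    by_contra h
    push_neg at h
    have hd : dist z xp < ε := by
      rw [Real.dist_eq, abs_of_pos (sub_pos.2 hz.1)]; linarith
    exact absurd (hball hd) (not_lt.2 hz.2)
  have hxph_gt : xp < xph := lt_of_lt_of_le (by linarith) (le_csInf hZne hlow)
  have hneg_mid : ∀ x, xp < x → x < xph → hfun α β x < 0 := by
    intro x h1 h2
    by_contra h
    push_neg at h
    exact absurd (csInf_le hZbdd ⟨h1, h⟩) (not_le.2 h2)
  have hle : hfun α β xph ≤ 0 := by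
    have htend : Tendsto (hfun α β) (𝓝[<] xph) (𝓝 (hfun α β xph)) :=
      ((hfun_cont α β).tendsto xph).mono_left nhdsWithin_le_nhds
    refine le_of_tendsto htend ?_
    filter_upwards [Ioo_mem_nhdsLT_of_mem ⟨hxph_gt, le_rfl⟩] with z hz
    exact (hneg_mid z hz.1 hz.2).le
  have hge : 0 ≤ hfun α β xph := by
    have hcl : xph ∈ closure Z := csInf_mem_closure hZne hZbdd
    have hsub : closure Z ⊆ {x | 0 ≤ hfun α β x} :=
      closure_minimal (fun z hz => hz.2)
        (isClosed_le continuous_const (hfun_cont α β))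
    exact hsub hcl
  have hzero : hfun α β xph = 0 := le_antisymm hle hge
  exact ⟨xph, hxph_gt, hzero, hneg_mid, fun x hx => pos_after xph hxph_gt hzero x hx⟩

end
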